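/- arXiv:hep-th/9509035 — 2 statements merged into one kernel-verified Lean document; each statement's English description precedes it below -/
import Mathlib

section
/- Represent a superfield on ℝ^D by a quadruple F = (f, f₊, f₋, f₊₋) of smooth real functions on ℝ^D (the components of f + f₊Θ⁺ + f₋Θ⁻ + f₊₋Θ⁺Θ⁻). Let ∂_μ (μ = 1,…,D) act componentwise, and define the odd derivatives ∂₊F := (f₊, 0, f₊₋, 0) and ∂₋F := (f₋, −f₊₋, 0, 0), and the constant superfields Θ⁺ := (0,1,0,0), Θ⁻ := (0,0,1,0). Suppose superfields B_μ (μ = 1,…,D), B₊, B₋ satisfy: ∂_μ B_ν − ∂_ν B_μ = 0 for all μ,ν; ∂_μ B_± − ∂_± B_μ = 0 for all μ; and ∂₊B₋ + ∂₋B₊ = 0. Then there exist a superfield A′ and real constants a₊₊, a₋₋ such that B_μ = ∂_μ A′ for all μ, B₊ = ∂₊A′ + a₊₊ Θ⁺, and B₋ = ∂₋A′ + a₋₋ Θ⁻. -/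
noncomputable section

/-- A superfield on `ℝ^D`, encoded by its four components `(f, f₊, f₋, f₊₋)`
(the components of `f + f₊Θ⁺ + f₋Θ⁻ + f₊₋Θ⁺Θ⁻`), indexed by `Fin 4` as
`0 ↦ f`, `1 ↦ f₊`, `2 ↦ f₋`, `3 ↦ f₊₋`. -/
abbrev SF (D : ℕ) := Fin 4 → (Fin D → ℝ) → ℝ

/-- Partial derivative in the `μ`-th coordinate direction. -/
def pdC {D : ℕ} (μ : Fin D) (f : (Fin D → ℝ) → ℝ) (x : Fin D → ℝ) : ℝ :=
  fderiv ℝ f x (Pi.single μ 1)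

/-- The even derivative `∂_μ`, acting componentwise. -/
def pdSF {D : ℕ} (μ : Fin D) (F : SF D) : SF D := fun k x => pdC μ (F k) x

/-- The odd derivative `∂₊F = (f₊, 0, f₊₋, 0)`. -/
def dPlus {D : ℕ} (F : SF D) : SF D := ![F 1, 0, F 3, 0]

/-- The odd derivative `∂₋F = (f₋, −f₊₋, 0, 0)`. -/
def dMinus {D : ℕ} (F : SF D) : SF D := ![F 2, -(F 3), 0, 0]

/-- The constant superfield `Θ⁺ = (0,1,0,0)`. -/
def ThetaP {D : ℕ} : SF D := ![0, 1, 0, 0]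

/-- The constant superfield `Θ⁻ = (0,0,1,0)`. -/
def ThetaM {D : ℕ} : SF D := ![0, 0, 1, 0]

/-- A superfield all of whose components are smooth. -/
def SmoothSF {D : ℕ} (F : SF D) : Prop := ∀ k, ContDiff ℝ (⊤ : ℕ∞) (F k)

open MeasureTheory intervalIntegral
open scoped ContDiff

variable {D : ℕ}

/-- Any CLM on `Fin D → ℝ` is determined by its values on the basis. -/
lemma clm_pi_apply (φ : (Fin D → ℝ) →L[ℝ] ℝ) (v : Fin D → ℝ) :
    φ v = ∑ μ, v μ * φ (Pi.single μ 1) := by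
  have hv : v = ∑ μ, (v μ) • (Pi.single μ (1:ℝ) : Fin D → ℝ) := by
    ext j
    simp [Pi.single_apply, Finset.sum_apply]
  conv_lhs => rw [hv]
  rw [map_sum]
  simp [smul_eq_mul]

section Poincare

variable (g : Fin D → (Fin D → ℝ) → ℝ)

/-- The explicit `x`-derivative of `x ↦ ∑ μ, x μ * g μ (t • x)`. -/
def Mder (x : Fin D → ℝ) (t : ℝ) : (Fin D → ℝ) →L[ℝ] ℝ :=
  ∑ μ, (g μ (t • x) • ContinuousLinearMap.proj μ
      + (x μ * t) • fderiv ℝ (g μ) (t • x))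

lemma hasFDerivAt_Mder (hg : ∀ μ, ContDiff ℝ (⊤ : ℕ∞) (g μ)) (x : Fin D → ℝ) (t : ℝ) :
    HasFDerivAt (fun y => ∑ μ, y μ * g μ (t • y)) (Mder g x t) x := by
  unfold Mder
  apply HasFDerivAt.fun_sum
  intro μ _
  have hin : HasFDerivAt (fun y : Fin D → ℝ => t • y)
      (t • ContinuousLinearMap.id ℝ (Fin D → ℝ)) x :=
    (t • ContinuousLinearMap.id ℝ (Fin D → ℝ)).hasFDerivAt
  have hcomp : HasFDerivAt (fun y : Fin D → ℝ => g μ (t • y))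
      ((fderiv ℝ (g μ) (t • x)).comp (t • ContinuousLinearMap.id ℝ (Fin D → ℝ))) x :=
    (((hg μ).differentiable (by simp) (t • x)).hasFDerivAt).comp x hin
  have hproj : HasFDerivAt (fun y : Fin D → ℝ => y μ)
      (ContinuousLinearMap.proj μ : (Fin D → ℝ) →L[ℝ] ℝ) x := by
    exact hasFDerivAt_apply μ x
  have : HasFDerivAt (fun y : Fin D → ℝ => y μ * g μ (t • y))
      (x μ • ((fderiv ℝ (g μ) (t • x)).comp (t • ContinuousLinearMap.id ℝ (Fin D → ℝ)))
        + g μ (t • x) • (ContinuousLinearMap.proj μ : (Fin D → ℝ) →L[ℝ] ℝ)) x := hproj.mul hcomp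
  refine this.congr_fderiv ?_
  ext v
  simp [ContinuousLinearMap.smul_apply, smul_eq_mul, _root_.map_smul]
  ring

lemma continuous_Mder (hg : ∀ μ, ContDiff ℝ (⊤ : ℕ∞) (g μ)) :
    Continuous (fun p : (Fin D → ℝ) × ℝ => Mder g p.1 p.2) := by
  unfold Mder
  apply continuous_finset_sum
  intro μ _
  have hc : Continuous (fun p : (Fin D → ℝ) × ℝ => p.2 • p.1) :=
    continuous_snd.smul continuous_fst
  exact (((hg μ).continuous.comp hc).smul continuous_const).add
    (((continuous_apply μ).comp continuous_fst |>.mul continuous_snd).smul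
      (((hg μ).continuous_fderiv (by simp)).comp hc))

lemma Mder_apply (x : Fin D → ℝ) (t : ℝ) (v : Fin D → ℝ) :
    Mder g x t v = ∑ μ, (g μ (t • x) * v μ + x μ * t * fderiv ℝ (g μ) (t • x) v) := by
  simp [Mder, ContinuousLinearMap.sum_apply, smul_eq_mul, mul_comm]

end Poincare

section Poincare2

variable (g : Fin D → (Fin D → ℝ) → ℝ)

lemma continuous_integrand (hg : ∀ μ, ContDiff ℝ (⊤ : ℕ∞) (g μ)) :
    Continuous (fun p : (Fin D → ℝ) × ℝ => ∑ μ, p.1 μ * g μ (p.2 • p.1)) := by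
  apply continuous_finset_sum
  intro μ _
  exact ((continuous_apply μ).comp continuous_fst).mul
    ((hg μ).continuous.comp (continuous_snd.smul continuous_fst))

lemma hasFDerivAt_pot (hg : ∀ μ, ContDiff ℝ (⊤ : ℕ∞) (g μ)) (x₀ : Fin D → ℝ) :
    HasFDerivAt (fun x => ∫ t in (0:ℝ)..1, ∑ μ, x μ * g μ (t • x))
      (∫ t in (0:ℝ)..1, Mder g x₀ t) x₀ := by
  have hK : IsCompact ((Metric.closedBall x₀ 1) ×ˢ Set.uIcc (0:ℝ) 1) :=
    (isCompact_closedBall x₀ 1).prod isCompact_uIcc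
  obtain ⟨C, hC⟩ := hK.exists_bound_of_continuousOn
    ((continuous_Mder g hg).continuousOn)
  apply intervalIntegral.hasFDerivAt_integral_of_dominated_of_fderiv_le
    (s := Metric.ball x₀ 1) (bound := fun _ => C) (Metric.ball_mem_nhds x₀ one_pos)
  · filter_upwards with x
    exact (Continuous.aestronglyMeasurable (by
      exact (continuous_integrand g hg).comp (Continuous.prodMk_right x))).restrict
  · exact ((continuous_integrand g hg).comp (Continuous.prodMk_right x₀)).intervalIntegrable 0 1
  · exact (Continuous.aestronglyMeasurable (by
      exact (continuous_Mder g hg).comp (Continuous.prodMk_right x₀))).restrict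
  · filter_upwards with t ht x hx
    exact hC (x, t) ⟨Metric.ball_subset_closedBall hx, Set.uIoc_subset_uIcc ht⟩
  · exact intervalIntegrable_const
  · filter_upwards with t ht x hx
    exact hasFDerivAt_Mder g hg x t

end Poincare2

section Poincare3

variable (g : Fin D → (Fin D → ℝ) → ℝ)

lemma Mder_apply_closed
    (hcl : ∀ μ ν x, fderiv ℝ (g ν) x (Pi.single μ 1) = fderiv ℝ (g μ) x (Pi.single ν 1))
    (x₀ v : Fin D → ℝ) (t : ℝ) :
    Mder g x₀ t v = ∑ ν, v ν * (g ν (t • x₀) + t * fderiv ℝ (g ν) (t • x₀) x₀) := by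
  rw [Mder_apply]
  simp only [mul_add, Finset.sum_add_distrib]
  congr 1
  · exact Finset.sum_congr rfl fun ν _ => mul_comm _ _
  · calc ∑ μ, x₀ μ * t * fderiv ℝ (g μ) (t • x₀) v
        = ∑ μ, ∑ ν, x₀ μ * t * (v ν * fderiv ℝ (g μ) (t • x₀) (Pi.single ν 1)) := by
          simp only [clm_pi_apply _ v, Finset.mul_sum]
      _ = ∑ ν, ∑ μ, v ν * (t * (x₀ μ * fderiv ℝ (g ν) (t • x₀) (Pi.single μ 1))) := by
          rw [Finset.sum_comm]
          refine Finset.sum_congr rfl fun ν _ => Finset.sum_congr rfl fun μ _ => ?_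
          rw [hcl ν μ]
          ring
      _ = ∑ ν, v ν * (t * fderiv ℝ (g ν) (t • x₀) x₀) := by
          refine Finset.sum_congr rfl fun ν _ => ?_
          rw [clm_pi_apply (fderiv ℝ (g ν) (t • x₀)) x₀, Finset.mul_sum, Finset.mul_sum]

lemma cont_aux (hg : ∀ μ, ContDiff ℝ (⊤ : ℕ∞) (g μ)) (x₀ : Fin D → ℝ) (ν : Fin D) :
    Continuous (fun t : ℝ => g ν (t • x₀) + t * fderiv ℝ (g ν) (t • x₀) x₀) := by
  have hsm : Continuous (fun t : ℝ => t • x₀) := continuous_id.smul continuous_const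
  exact ((hg ν).continuous.comp hsm).add (continuous_id.mul
    ((ContinuousLinearMap.apply ℝ ℝ x₀).continuous.comp
      (((hg ν).continuous_fderiv (by simp)).comp hsm)))

lemma integral_Mder_apply (hg : ∀ μ, ContDiff ℝ (⊤ : ℕ∞) (g μ))
    (hcl : ∀ μ ν x, fderiv ℝ (g ν) x (Pi.single μ 1) = fderiv ℝ (g μ) x (Pi.single ν 1))
    (x₀ v : Fin D → ℝ) :
    ∫ t in (0:ℝ)..1, Mder g x₀ t v = ∑ ν, v ν * g ν x₀ := by
  simp only [Mder_apply_closed g hcl x₀ v]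
  rw [intervalIntegral.integral_finset_sum (fun ν _ =>
    (Continuous.intervalIntegrable (by exact continuous_const.mul (cont_aux g hg x₀ ν)) 0 1))]
  refine Finset.sum_congr rfl fun ν _ => ?_
  rw [intervalIntegral.integral_const_mul]
  congr 1
  have hder : ∀ t ∈ Set.uIcc (0:ℝ) 1, HasDerivAt (fun t : ℝ => t * g ν (t • x₀))
      (g ν (t • x₀) + t * fderiv ℝ (g ν) (t • x₀) x₀) t := by
    intro t _
    have h1 : HasDerivAt (fun t : ℝ => t • x₀) x₀ t := by
      simpa using (hasDerivAt_id t).smul_const x₀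
    have hinner : HasDerivAt (fun t : ℝ => g ν (t • x₀)) (fderiv ℝ (g ν) (t • x₀) x₀) t :=
      (((hg ν).differentiable (by simp) (t • x₀)).hasFDerivAt).comp_hasDerivAt t h1
    have : HasDerivAt (fun t : ℝ => id t * g ν (t • x₀)) _ t := (hasDerivAt_id t).mul hinner
    convert this using 1
    all_goals simp
  have := intervalIntegral.integral_eq_sub_of_hasDerivAt hder
    ((cont_aux g hg x₀ ν).intervalIntegrable 0 1)
  simpa using this

lemma poincare (hg : ∀ μ, ContDiff ℝ (⊤ : ℕ∞) (g μ))
    (hcl : ∀ μ ν x, fderiv ℝ (g ν) x (Pi.single μ 1) = fderiv ℝ (g μ) x (Pi.single ν 1)) :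
    ∃ f, ContDiff ℝ (⊤ : ℕ∞) f ∧ ∀ μ x, fderiv ℝ f x (Pi.single μ 1) = g μ x := by
  set f : (Fin D → ℝ) → ℝ := fun x => ∫ t in (0:ℝ)..1, ∑ μ, x μ * g μ (t • x) with hf
  set L : (Fin D → ℝ) → (Fin D → ℝ) →L[ℝ] ℝ :=
    fun x => ∑ ν, g ν x • (ContinuousLinearMap.proj ν) with hLdef
  have hL : ∀ x v, L x v = ∑ ν, v ν * g ν x := by
    intro x v
    simp [hLdef, ContinuousLinearMap.sum_apply, smul_eq_mul, mul_comm]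
  have hMint : ∀ x₀ : Fin D → ℝ, IntervalIntegrable (fun t => Mder g x₀ t) volume 0 1 :=
    fun x₀ => ((continuous_Mder g hg).comp (Continuous.prodMk_right x₀)).intervalIntegrable 0 1
  have hEq : ∀ x₀, (∫ t in (0:ℝ)..1, Mder g x₀ t) = L x₀ := by
    intro x₀
    ext v
    rw [ContinuousLinearMap.intervalIntegral_apply (hMint x₀) v,
      integral_Mder_apply g hg hcl x₀ v, hL]
  have hF : ∀ x₀, HasFDerivAt f (L x₀) x₀ := fun x₀ => hEq x₀ ▸ hasFDerivAt_pot g hg x₀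
  have hfderiv : fderiv ℝ f = L := funext fun x => (hF x).fderiv
  refine ⟨f, ?_, ?_⟩
  · rw [contDiff_infty_iff_fderiv]
    refine ⟨fun x => (hF x).differentiableAt, ?_⟩
    rw [hfderiv]
    exact ContDiff.sum fun ν _ => (hg ν).smul contDiff_const
  · intro μ x
    rw [hfderiv, hL]
    simp [Pi.single_apply]

end Poincare3

lemma const_of_pd (f : (Fin D → ℝ) → ℝ) (hf : ContDiff ℝ (⊤ : ℕ∞) f)
    (h0 : ∀ μ x, fderiv ℝ f x (Pi.single μ 1) = 0) : ∀ x, f x = f 0 := by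
  intro x
  apply is_const_of_fderiv_eq_zero (𝕜 := ℝ) (hf.differentiable (by simp))
  intro y
  ext v
  rw [ContinuousLinearMap.zero_apply, clm_pi_apply]
  simp [h0]

/-- Super-Poincaré lemma for almost closed super-one-forms: a super-one-form
`(B_μ, B₊, B₋)` which is closed in all components except `(++)` and `(−−)` is of the form
`B_μ = ∂_μA′`, `B₊ = ∂₊A′ + a₊₊Θ⁺`, `B₋ = ∂₋A′ + a₋₋Θ⁻`. -/
theorem stmt5 {D : ℕ} (Bv : Fin D → SF D) (Bp Bm : SF D)
    (hBv : ∀ μ, SmoothSF (Bv μ)) (hBp : SmoothSF Bp) (hBm : SmoothSF Bm)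
    (h1 : ∀ μ ν, pdSF μ (Bv ν) - pdSF ν (Bv μ) = 0)
    (h2p : ∀ μ, pdSF μ Bp - dPlus (Bv μ) = 0)
    (h2m : ∀ μ, pdSF μ Bm - dMinus (Bv μ) = 0)
    (h3 : dPlus Bm + dMinus Bp = 0) :
    ∃ (A' : SF D) (app amm : ℝ), SmoothSF A' ∧
      (∀ μ, Bv μ = pdSF μ A') ∧
      Bp = dPlus A' + app • ThetaP ∧
      Bm = dMinus A' + amm • ThetaM := by
  classical
  have hcl : ∀ μ ν x, fderiv ℝ (Bv ν 0) x (Pi.single μ 1)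
      = fderiv ℝ (Bv μ 0) x (Pi.single ν 1) := by
    intro μ ν x
    have := congrFun (congrFun (h1 μ ν) 0) x
    simpa [pdSF, pdC, sub_eq_zero] using this
  obtain ⟨f, hfs, hfd⟩ := poincare (fun μ => Bv μ 0) (fun μ => hBv μ 0) hcl
  have hBp1 : ∀ x, Bp 1 x = Bp 1 0 := by
    apply const_of_pd _ (hBp 1)
    intro μ x
    have := congrFun (congrFun (h2p μ) 1) x
    simpa [pdSF, pdC, dPlus, sub_eq_zero] using this
  have hBm2 : ∀ x, Bm 2 x = Bm 2 0 := by
    apply const_of_pd _ (hBm 2)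
    intro μ x
    have := congrFun (congrFun (h2m μ) 2) x
    simpa [pdSF, pdC, dMinus, sub_eq_zero] using this
  have h30 : ∀ x, Bm 1 x + Bp 2 x = 0 := by
    intro x
    have := congrFun (congrFun h3 0) x
    simpa [dPlus, dMinus] using this
  have h31 : ∀ x, Bp 3 x = 0 := by
    intro x
    have := congrFun (congrFun h3 1) x
    simpa [dPlus, dMinus, neg_eq_zero] using this
  have h32 : ∀ x, Bm 3 x = 0 := by
    intro x
    have := congrFun (congrFun h3 2) x
    simpa [dPlus, dMinus] using this
  refine ⟨![f, Bp 0, Bm 0, Bp 2], Bp 1 0, Bm 2 0, ?_, ?_, ?_, ?_⟩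
  · intro k
    fin_cases k
    exacts [hfs, hBp 0, hBm 0, hBp 2]
  · intro μ
    funext k x
    fin_cases k
    · exact (hfd μ x).symm
    · have h : pdC μ (Bp 0) x = Bv μ 1 x := by
        have := congrFun (congrFun (h2p μ) 0) x
        simpa [pdSF, dPlus, sub_eq_zero] using this
      exact h.symm
    · have h : pdC μ (Bm 0) x = Bv μ 2 x := by
        have := congrFun (congrFun (h2m μ) 0) x
        simpa [pdSF, dMinus, sub_eq_zero] using this
      exact h.symm
    · have h : pdC μ (Bp 2) x = Bv μ 3 x := by
        have := congrFun (congrFun (h2p μ) 2) x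
        simpa [pdSF, dPlus, sub_eq_zero] using this
      exact h.symm
  · funext k x
    fin_cases k
    · simp [dPlus, ThetaP]
    · simp [dPlus, ThetaP]
      exact hBp1 x
    · simp [dPlus, ThetaP]
    · simp [dPlus, ThetaP]
      exact h31 x
  · funext k x
    fin_cases k
    · simp [dMinus, ThetaM]
    · simp [dMinus, ThetaM]
      have := h30 x
      linarith
    · simp [dMinus, ThetaM]
      exact hBm2 x
    · simp [dMinus, ThetaM]
      exact h32 x
end
end

section
/- If (ζ, b) and (ξ, c) are Killing pairs on ℝ^D, then (η, e) is also a Killing pair, where η^μ := ζ^ν ∂_ν ξ^μ − ξ^ν ∂_ν ζ^μ is the Lie bracket of ζ and ξ, and e_μ := (ℒ_ζ c)_μ − (ℒ_ξ b)_μ − H_{μνρ} ζ^ν ξ^ρ, with the Lie derivative of a covector defined by (ℒ_ζ c)_μ := ζ^ρ ∂_ρ c_μ + ∂_μ ζ^ρ · c_ρ. -/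
noncomputable section

/-- Partial derivative of `f` at `x` in the `μ`-th coordinate direction. -/
def pd {D : ℕ} (μ : Fin D) (f : (Fin D → ℝ) → ℝ) (x : Fin D → ℝ) : ℝ :=
  fderiv ℝ f x (Pi.single μ 1)

/-- A smooth real-valued function. -/
def Sm {D : ℕ} (f : (Fin D → ℝ) → ℝ) : Prop := ContDiff ℝ (⊤ : ℕ∞) f

/-- A smooth vector field on `ℝ^D`. -/
def SmoothVF {D : ℕ} (V : (Fin D → ℝ) → Fin D → ℝ) : Prop := ∀ μ, Sm fun x => V x μ

/-- A smooth field of 2-tensors on `ℝ^D`. -/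
def Smooth2T {D : ℕ} (T : (Fin D → ℝ) → Fin D → Fin D → ℝ) : Prop :=
  ∀ μ ν, Sm fun x => T x μ ν

/-- The connection coefficients `Γ_{μν,ρ} = ½(∂_μG_{νρ} + ∂_νG_{μρ} − ∂_ρG_{μν})`. -/
def Gam {D : ℕ} (G : (Fin D → ℝ) → Fin D → Fin D → ℝ) (μ ν ρ : Fin D) (x : Fin D → ℝ) : ℝ :=
  (pd μ (fun y => G y ν ρ) x + pd ν (fun y => G y μ ρ) x - pd ρ (fun y => G y μ ν) x) / 2

/-- The torsion `H_{μνρ} = ∂_μB_{νρ} + ∂_νB_{ρμ} + ∂_ρB_{μν}`. -/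
def Htor {D : ℕ} (B : (Fin D → ℝ) → Fin D → Fin D → ℝ) (μ ν ρ : Fin D) (x : Fin D → ℝ) : ℝ :=
  pd μ (fun y => B y ν ρ) x + pd ν (fun y => B y ρ μ) x + pd ρ (fun y => B y μ ν) x

/-- `Γ⁺_{μν,ρ} = Γ_{μν,ρ} + ½H_{μνρ}`. -/
def GamP {D : ℕ} (G B : (Fin D → ℝ) → Fin D → Fin D → ℝ) (μ ν ρ : Fin D) (x : Fin D → ℝ) : ℝ :=
  Gam G μ ν ρ x + Htor B μ ν ρ x / 2

/-- `Γ⁻_{μν,ρ} = Γ_{μν,ρ} − ½H_{μνρ}`. -/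
def GamM {D : ℕ} (G B : (Fin D → ℝ) → Fin D → Fin D → ℝ) (μ ν ρ : Fin D) (x : Fin D → ℝ) : ℝ :=
  Gam G μ ν ρ x - Htor B μ ν ρ x / 2

/-- The lowered components `V_μ = G_{μν}V^ν` of a vector field. -/
def lowerV {D : ℕ} (G : (Fin D → ℝ) → Fin D → Fin D → ℝ)
    (V : (Fin D → ℝ) → Fin D → ℝ) (μ : Fin D) (x : Fin D → ℝ) : ℝ :=
  ∑ ν, G x μ ν * V x ν

/-- The covariant derivative `D⁺_μV_ν = G_{νρ}∂_μV^ρ + Γ⁺_{μρ,ν}V^ρ`. -/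
def Dp {D : ℕ} (G B : (Fin D → ℝ) → Fin D → Fin D → ℝ)
    (V : (Fin D → ℝ) → Fin D → ℝ) (μ ν : Fin D) (x : Fin D → ℝ) : ℝ :=
  (∑ ρ, G x ν ρ * pd μ (fun y => V y ρ) x) + ∑ ρ, GamP G B μ ρ ν x * V x ρ

/-- The covariant derivative `D⁻_μV_ν = G_{νρ}∂_μV^ρ + Γ⁻_{μρ,ν}V^ρ`. -/
def Dm {D : ℕ} (G B : (Fin D → ℝ) → Fin D → Fin D → ℝ)
    (V : (Fin D → ℝ) → Fin D → ℝ) (μ ν : Fin D) (x : Fin D → ℝ) : ℝ :=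
  (∑ ρ, G x ν ρ * pd μ (fun y => V y ρ) x) + ∑ ρ, GamM G B μ ρ ν x * V x ρ

/-- The Lie derivative of the metric:
`(ℒ_ζG)_{μν} = ζ^ρ∂_ρG_{μν} + ∂_μζ^ρ·G_{ρν} + ∂_νζ^ρ·G_{μρ}`. -/
def lieG {D : ℕ} (G : (Fin D → ℝ) → Fin D → Fin D → ℝ)
    (ζ : (Fin D → ℝ) → Fin D → ℝ) (μ ν : Fin D) (x : Fin D → ℝ) : ℝ :=
  (∑ ρ, ζ x ρ * pd ρ (fun y => G y μ ν) x)
    + (∑ ρ, pd μ (fun y => ζ y ρ) x * G x ρ ν)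
    + ∑ ρ, pd ν (fun y => ζ y ρ) x * G x μ ρ

/-- A Killing pair `(ζ, b)`: `D⁻_μζ_ν + D⁺_νζ_μ + ∂_μb_ν − ∂_νb_μ = 0`. -/
def IsKillingPair {D : ℕ} (G B : (Fin D → ℝ) → Fin D → Fin D → ℝ)
    (ζ b : (Fin D → ℝ) → Fin D → ℝ) : Prop :=
  ∀ (μ ν : Fin D) (x : Fin D → ℝ),
    Dm G B ζ μ ν x + Dp G B ζ ν μ x
      + pd μ (fun y => b y ν) x - pd ν (fun y => b y μ) x = 0

/-! ### Toolkit -/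

variable {D : ℕ}

lemma Sm.diff {f : (Fin D → ℝ) → ℝ} (hf : Sm f) : Differentiable ℝ f :=
  hf.differentiable (by simp)

lemma Sm.add {f g : (Fin D → ℝ) → ℝ} (hf : Sm f) (hg : Sm g) : Sm (fun x => f x + g x) :=
  ContDiff.add hf hg

lemma Sm.mul {f g : (Fin D → ℝ) → ℝ} (hf : Sm f) (hg : Sm g) : Sm (fun x => f x * g x) :=
  ContDiff.mul hf hg

lemma Sm.neg {f : (Fin D → ℝ) → ℝ} (hf : Sm f) : Sm (fun x => -f x) := ContDiff.neg hf

lemma Sm.sub {f g : (Fin D → ℝ) → ℝ} (hf : Sm f) (hg : Sm g) : Sm (fun x => f x - g x) :=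
  ContDiff.sub hf hg

lemma Sm.sum {ι : Type*} (s : Finset ι) {f : ι → (Fin D → ℝ) → ℝ}
    (hf : ∀ i ∈ s, Sm (f i)) : Sm (fun x => ∑ i ∈ s, f i x) :=
  ContDiff.sum hf

lemma Sm.pd {f : (Fin D → ℝ) → ℝ} (hf : Sm f) (μ : Fin D) : Sm (fun x => pd μ f x) := by
  have h1 : ContDiff ℝ (⊤ : ℕ∞) (fun x => fderiv ℝ f x) :=
    (hf.fderiv_right (m := (⊤ : ℕ∞)) (le_of_eq ENat.coe_top_add_one))
  exact h1.clm_apply contDiff_const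

lemma pd_add {f g : (Fin D → ℝ) → ℝ} (hf : Sm f) (hg : Sm g) (μ : Fin D) (x : Fin D → ℝ) :
    pd μ (fun y => f y + g y) x = pd μ f x + pd μ g x := by
  unfold pd
  rw [fderiv_fun_add (hf.diff x) (hg.diff x)]; rfl

lemma pd_neg {f : (Fin D → ℝ) → ℝ} (μ : Fin D) (x : Fin D → ℝ) :
    pd μ (fun y => -f y) x = -pd μ f x := by
  unfold pd; rw [fderiv_fun_neg]; rfl

lemma pd_sub {f g : (Fin D → ℝ) → ℝ} (hf : Sm f) (hg : Sm g) (μ : Fin D) (x : Fin D → ℝ) :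
    pd μ (fun y => f y - g y) x = pd μ f x - pd μ g x := by
  unfold pd
  rw [fderiv_fun_sub (hf.diff x) (hg.diff x)]; rfl

lemma pd_mul {f g : (Fin D → ℝ) → ℝ} (hf : Sm f) (hg : Sm g) (μ : Fin D) (x : Fin D → ℝ) :
    pd μ (fun y => f y * g y) x = pd μ f x * g x + f x * pd μ g x := by
  unfold pd
  rw [fderiv_fun_mul (hf.diff x) (hg.diff x)]
  simp only [ContinuousLinearMap.add_apply, ContinuousLinearMap.smul_apply, smul_eq_mul]
  ring

lemma pd_sum {ι : Type*} (s : Finset ι) {f : ι → (Fin D → ℝ) → ℝ}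
    (hf : ∀ i ∈ s, Sm (f i)) (μ : Fin D) (x : Fin D → ℝ) :
    pd μ (fun y => ∑ i ∈ s, f i y) x = ∑ i ∈ s, pd μ (f i) x := by
  unfold pd
  rw [fderiv_fun_sum (fun i hi => (hf i hi).diff x)]
  simp

lemma pd_const (c : ℝ) (μ : Fin D) (x : Fin D → ℝ) : pd μ (fun _ => c) x = 0 := by
  unfold pd; rw [fderiv_fun_const]; rfl

lemma pd_comm {f : (Fin D → ℝ) → ℝ} (hf : Sm f) (μ ν : Fin D) (x : Fin D → ℝ) :
    pd μ (fun y => pd ν f y) x = pd ν (fun y => pd μ f y) x := by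
  have hsym : IsSymmSndFDerivAt ℝ f x := by
    apply (hf.contDiffAt).isSymmSndFDerivAt
    rw [minSmoothness_of_isRCLikeNormedField]
    exact_mod_cast ENat.natCast_le_of_coe_top_le_withTop le_rfl 2
  have hd : DifferentiableAt ℝ (fderiv ℝ f) x := by
    have := (hf.fderiv_right (m := (⊤ : ℕ∞)) (le_of_eq ENat.coe_top_add_one))
    exact this.differentiable (by simp) x
  have key : ∀ v w : Fin D → ℝ,
      fderiv ℝ (fun y => fderiv ℝ f y v) x w = fderiv ℝ (fderiv ℝ f) x w v := by
    intro v w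
    rw [fderiv_clm_apply hd (differentiableAt_const v)]
    simp
  unfold pd
  rw [key, key]
  exact hsym.eq _ _

lemma pd_sum_mul {f g : Fin D → (Fin D → ℝ) → ℝ}
    (hf : ∀ i, Sm (f i)) (hg : ∀ i, Sm (g i)) (μ : Fin D) (x : Fin D → ℝ) :
    pd μ (fun y => ∑ i, f i y * g i y) x
      = ∑ i, (pd μ (f i) x * g i x + f i x * pd μ (g i) x) := by
  rw [pd_sum _ (fun i _ => Sm.mul (hf i) (hg i))]
  exact Finset.sum_congr rfl fun i _ => pd_mul (hf i) (hg i) μ x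

lemma sum_antisym {F : Fin D → Fin D → ℝ} (h : ∀ ρ σ, F ρ σ + F σ ρ = 0) :
    (∑ ρ, ∑ σ, F ρ σ) = 0 := by
  have key : (∑ ρ, ∑ σ, F ρ σ) + (∑ ρ, ∑ σ, F ρ σ) = 0 := by
    nth_rewrite 2 [Finset.sum_comm]
    rw [← Finset.sum_add_distrib]
    refine Finset.sum_eq_zero fun ρ _ => ?_
    rw [← Finset.sum_add_distrib]
    exact Finset.sum_eq_zero fun σ _ => h ρ σ
  linarith

/-! ### Auxiliary definitions -/

/-- `(i_V H)_{μν} = H_{μνρ} V^ρ`. -/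
def iHc (B : (Fin D → ℝ) → Fin D → Fin D → ℝ) (V : (Fin D → ℝ) → Fin D → ℝ)
    (μ ν : Fin D) (x : Fin D → ℝ) : ℝ :=
  ∑ ρ, Htor B μ ν ρ x * V x ρ

/-- `(dw)_{μν} = ∂_μ w_ν − ∂_ν w_μ`. -/
def dF (w : (Fin D → ℝ) → Fin D → ℝ) (μ ν : Fin D) (x : Fin D → ℝ) : ℝ :=
  pd μ (fun y => w y ν) x - pd ν (fun y => w y μ) x

/-- The Killing expression in Lie-derivative form. -/
def Kil (G B : (Fin D → ℝ) → Fin D → Fin D → ℝ) (V w : (Fin D → ℝ) → Fin D → ℝ)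
    (μ ν : Fin D) (x : Fin D → ℝ) : ℝ :=
  lieG G V μ ν x + iHc B V μ ν x + dF w μ ν x

/-- Lie derivative of a 2-tensor field along `ζ`. -/
def lieT (ζ : (Fin D → ℝ) → Fin D → ℝ) (T : Fin D → Fin D → (Fin D → ℝ) → ℝ)
    (μ ν : Fin D) (x : Fin D → ℝ) : ℝ :=
  (∑ ρ, ζ x ρ * pd ρ (T μ ν) x) + (∑ ρ, pd μ (fun y => ζ y ρ) x * T ρ ν x)
    + ∑ ρ, pd ν (fun y => ζ y ρ) x * T μ ρ x

/-- Lie bracket of vector fields. -/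
def br (ζ ξ : (Fin D → ℝ) → Fin D → ℝ) (x : Fin D → ℝ) (μ : Fin D) : ℝ :=
  (∑ ν, ζ x ν * pd ν (fun y => ξ y μ) x) - ∑ ν, ξ x ν * pd ν (fun y => ζ y μ) x

/-- Lie derivative of a covector field. -/
def lv (ζ c : (Fin D → ℝ) → Fin D → ℝ) (x : Fin D → ℝ) (μ : Fin D) : ℝ :=
  (∑ ρ, ζ x ρ * pd ρ (fun y => c y μ) x) + ∑ ρ, pd μ (fun y => ζ y ρ) x * c x ρ

/-- `w_μ = H_{μνρ} ζ^ν ξ^ρ`. -/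
def wH (B : (Fin D → ℝ) → Fin D → Fin D → ℝ) (ζ ξ : (Fin D → ℝ) → Fin D → ℝ)
    (x : Fin D → ℝ) (μ : Fin D) : ℝ :=
  ∑ ν, ∑ ρ, Htor B μ ν ρ x * ζ x ν * ξ x ρ

/-! ### Smoothness of composite fields -/

lemma Sm_Htor {B : (Fin D → ℝ) → Fin D → Fin D → ℝ} (hBs : Smooth2T B) (μ ν ρ : Fin D) :
    Sm (fun x => Htor B μ ν ρ x) :=
  Sm.add (Sm.add ((hBs ν ρ).pd μ) ((hBs ρ μ).pd ν)) ((hBs μ ν).pd ρ)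

lemma Sm_lieG {G : (Fin D → ℝ) → Fin D → Fin D → ℝ} {ζ : (Fin D → ℝ) → Fin D → ℝ}
    (hGs : Smooth2T G) (hζ : SmoothVF ζ) (μ ν : Fin D) :
    Sm (fun x => lieG G ζ μ ν x) := by
  refine Sm.add (Sm.add ?_ ?_) ?_ <;>
    exact Sm.sum _ fun ρ _ => Sm.mul (by first | exact hζ ρ | exact (hζ ρ).pd _)
      (by first | exact (hGs _ _).pd _ | exact hGs _ _)

lemma Sm_iHc {B : (Fin D → ℝ) → Fin D → Fin D → ℝ} {ζ : (Fin D → ℝ) → Fin D → ℝ}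
    (hBs : Smooth2T B) (hζ : SmoothVF ζ) (μ ν : Fin D) :
    Sm (fun x => iHc B ζ μ ν x) :=
  Sm.sum _ fun ρ _ => Sm.mul (Sm_Htor hBs μ ν ρ) (hζ ρ)

lemma Sm_dF {c : (Fin D → ℝ) → Fin D → ℝ} (hc : SmoothVF c) (μ ν : Fin D) :
    Sm (fun x => dF c μ ν x) :=
  Sm.sub ((hc ν).pd μ) ((hc μ).pd ν)

lemma Sm_Kil {G B : (Fin D → ℝ) → Fin D → Fin D → ℝ} {V w : (Fin D → ℝ) → Fin D → ℝ}
    (hGs : Smooth2T G) (hBs : Smooth2T B) (hV : SmoothVF V) (hw : SmoothVF w) (μ ν : Fin D) :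
    Sm (fun x => Kil G B V w μ ν x) :=
  Sm.add (Sm.add (Sm_lieG hGs hV μ ν) (Sm_iHc hBs hV μ ν)) (Sm_dF hw μ ν)

lemma Sm_br {ζ ξ : (Fin D → ℝ) → Fin D → ℝ} (hζ : SmoothVF ζ) (hξ : SmoothVF ξ) :
    SmoothVF (br ζ ξ) := fun μ =>
  Sm.sub (Sm.sum _ fun ρ _ => Sm.mul (hζ ρ) ((hξ μ).pd ρ))
    (Sm.sum _ fun ρ _ => Sm.mul (hξ ρ) ((hζ μ).pd ρ))

lemma Sm_lv {ζ c : (Fin D → ℝ) → Fin D → ℝ} (hζ : SmoothVF ζ) (hc : SmoothVF c) :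
    SmoothVF (lv ζ c) := fun μ =>
  Sm.add (Sm.sum _ fun ρ _ => Sm.mul (hζ ρ) ((hc μ).pd ρ))
    (Sm.sum _ fun ρ _ => Sm.mul ((hζ ρ).pd μ) (hc ρ))

lemma Sm_wH {B : (Fin D → ℝ) → Fin D → Fin D → ℝ} {ζ ξ : (Fin D → ℝ) → Fin D → ℝ}
    (hBs : Smooth2T B) (hζ : SmoothVF ζ) (hξ : SmoothVF ξ) :
    SmoothVF (wH B ζ ξ) := fun μ =>
  Sm.sum _ fun ν _ => Sm.sum _ fun ρ _ =>
    Sm.mul (Sm.mul (Sm_Htor hBs μ ν ρ) (hζ ν)) (hξ ρ)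

/-! ### L3: d commutes with Lie derivative -/

lemma pd_lv {ζ c : (Fin D → ℝ) → Fin D → ℝ} (hζ : SmoothVF ζ) (hc : SmoothVF c)
    (a e : Fin D) (x : Fin D → ℝ) :
    pd a (fun y => lv ζ c y e) x
      = (∑ ρ, (pd a (fun y => ζ y ρ) x * pd ρ (fun y => c y e) x
            + ζ x ρ * pd a (fun y => pd ρ (fun z => c z e) y) x))
        + ∑ ρ, (pd a (fun y => pd e (fun z => ζ z ρ) y) x * c x ρ
            + pd e (fun y => ζ y ρ) x * pd a (fun y => c y ρ) x) := by
  have hf : Sm (fun y => ∑ ρ, ζ y ρ * pd ρ (fun z => c z e) y) :=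
    Sm.sum _ fun ρ _ => Sm.mul (hζ ρ) ((hc e).pd ρ)
  have hg : Sm (fun y => ∑ ρ, pd e (fun z => ζ z ρ) y * c y ρ) :=
    Sm.sum _ fun ρ _ => Sm.mul ((hζ ρ).pd e) (hc ρ)
  simp only [lv]
  rw [pd_add hf hg,
    pd_sum_mul (f := fun ρ y => ζ y ρ) (g := fun ρ => pd ρ (fun z => c z e))
      (fun ρ => hζ ρ) (fun ρ => (hc e).pd ρ),
    pd_sum_mul (f := fun ρ => pd e (fun z => ζ z ρ)) (g := fun ρ y => c y ρ)
      (fun ρ => (hζ ρ).pd e) (fun ρ => hc ρ)]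

lemma L3 {ζ c : (Fin D → ℝ) → Fin D → ℝ} (hζ : SmoothVF ζ) (hc : SmoothVF c)
    (μ ν : Fin D) (x : Fin D → ℝ) :
    dF (lv ζ c) μ ν x = lieT ζ (fun μ ν x => dF c μ ν x) μ ν x := by
  have e2 : ∀ ρ : Fin D, pd ρ (fun y => dF c μ ν y) x
      = pd ρ (fun y => pd μ (fun z => c z ν) y) x
        - pd ρ (fun y => pd ν (fun z => c z μ) y) x := fun ρ => by
    simp only [dF]
    exact pd_sub ((hc ν).pd μ) ((hc μ).pd ν) ρ x
  simp only [lieT]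
  simp only [e2]
  simp only [dF]
  rw [pd_lv hζ hc μ ν x, pd_lv hζ hc ν μ x]
  rw [← sub_eq_zero]
  simp only [Finset.mul_sum, mul_sub, mul_add, ← Finset.sum_sub_distrib, ← Finset.sum_add_distrib]
  refine Finset.sum_eq_zero fun ρ _ => ?_
  rw [pd_comm (hc ν) μ ρ x, pd_comm (hc μ) ν ρ x, pd_comm (hζ ρ) μ ν x]
  ring

/-! ### L1 -/

lemma pd_br {ζ ξ : (Fin D → ℝ) → Fin D → ℝ} (hζ : SmoothVF ζ) (hξ : SmoothVF ξ)
    (a e : Fin D) (x : Fin D → ℝ) :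
    pd a (fun y => br ζ ξ y e) x
      = (∑ σ, (pd a (fun y => ζ y σ) x * pd σ (fun y => ξ y e) x
            + ζ x σ * pd a (fun y => pd σ (fun z => ξ z e) y) x))
        - ∑ σ, (pd a (fun y => ξ y σ) x * pd σ (fun y => ζ y e) x
            + ξ x σ * pd a (fun y => pd σ (fun z => ζ z e) y) x) := by
  have hf : Sm (fun y => ∑ σ, ζ y σ * pd σ (fun z => ξ z e) y) :=
    Sm.sum _ fun σ _ => Sm.mul (hζ σ) ((hξ e).pd σ)
  have hg : Sm (fun y => ∑ σ, ξ y σ * pd σ (fun z => ζ z e) y) :=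
    Sm.sum _ fun σ _ => Sm.mul (hξ σ) ((hζ e).pd σ)
  simp only [br]
  rw [pd_sub hf hg,
    pd_sum_mul (f := fun σ y => ζ y σ) (g := fun σ => pd σ (fun z => ξ z e))
      (fun σ => hζ σ) (fun σ => (hξ e).pd σ),
    pd_sum_mul (f := fun σ y => ξ y σ) (g := fun σ => pd σ (fun z => ζ z e))
      (fun σ => hξ σ) (fun σ => (hζ e).pd σ)]

lemma pd_lieG {G : (Fin D → ℝ) → Fin D → Fin D → ℝ} {ξ : (Fin D → ℝ) → Fin D → ℝ}
    (hGs : Smooth2T G) (hξ : SmoothVF ξ) (μ ν ρ : Fin D) (x : Fin D → ℝ) :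
    pd ρ (fun y => lieG G ξ μ ν y) x
      = ((∑ σ, (pd ρ (fun y => ξ y σ) x * pd σ (fun y => G y μ ν) x
            + ξ x σ * pd ρ (fun y => pd σ (fun z => G z μ ν) y) x))
        + ∑ σ, (pd ρ (fun y => pd μ (fun z => ξ z σ) y) x * G x σ ν
            + pd μ (fun y => ξ y σ) x * pd ρ (fun y => G y σ ν) x))
        + ∑ σ, (pd ρ (fun y => pd ν (fun z => ξ z σ) y) x * G x μ σ
            + pd ν (fun y => ξ y σ) x * pd ρ (fun y => G y μ σ) x) := by
  have h1 : Sm (fun y => ∑ σ, ξ y σ * pd σ (fun z => G z μ ν) y) :=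
    Sm.sum _ fun σ _ => Sm.mul (hξ σ) ((hGs μ ν).pd σ)
  have h2 : Sm (fun y => ∑ σ, pd μ (fun z => ξ z σ) y * G y σ ν) :=
    Sm.sum _ fun σ _ => Sm.mul ((hξ σ).pd μ) (hGs σ ν)
  have h3 : Sm (fun y => ∑ σ, pd ν (fun z => ξ z σ) y * G y μ σ) :=
    Sm.sum _ fun σ _ => Sm.mul ((hξ σ).pd ν) (hGs μ σ)
  simp only [lieG]
  rw [pd_add (Sm.add h1 h2) h3, pd_add h1 h2,
    pd_sum_mul (f := fun σ y => ξ y σ) (g := fun σ => pd σ (fun z => G z μ ν))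
      (fun σ => hξ σ) (fun σ => (hGs μ ν).pd σ),
    pd_sum_mul (f := fun σ => pd μ (fun z => ξ z σ)) (g := fun σ y => G y σ ν)
      (fun σ => (hξ σ).pd μ) (fun σ => hGs σ ν),
    pd_sum_mul (f := fun σ => pd ν (fun z => ξ z σ)) (g := fun σ y => G y μ σ)
      (fun σ => (hξ σ).pd ν) (fun σ => hGs μ σ)]

lemma L1 {G : (Fin D → ℝ) → Fin D → Fin D → ℝ} {ζ ξ : (Fin D → ℝ) → Fin D → ℝ}
    (hGs : Smooth2T G) (hζ : SmoothVF ζ) (hξ : SmoothVF ξ) (μ ν : Fin D) (x : Fin D → ℝ) :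
    lieG G (br ζ ξ) μ ν x
      = lieT ζ (fun μ ν x => lieG G ξ μ ν x) μ ν x
        - lieT ξ (fun μ ν x => lieG G ζ μ ν x) μ ν x := by
  simp only [lieT]
  simp only [pd_lieG hGs hξ μ ν, pd_lieG hGs hζ μ ν]
  simp only [lieG]
  simp only [pd_br hζ hξ]
  simp only [br]
  rw [← sub_eq_zero]
  simp only [Finset.mul_sum, Finset.sum_mul, mul_sub, mul_add, sub_mul, add_mul,
    ← Finset.sum_sub_distrib, ← Finset.sum_add_distrib]
  refine sum_antisym fun ρ σ => ?_
  simp only [pd_comm (hGs μ ν) ν μ x, pd_comm (hGs μ ν) ρ μ x, pd_comm (hGs μ ν) ρ ν x,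
    pd_comm (hGs μ ν) σ μ x, pd_comm (hGs μ ν) σ ν x, pd_comm (hGs μ ν) σ ρ x,
    pd_comm (hζ ρ) ν μ x, pd_comm (hζ ρ) ρ μ x, pd_comm (hζ ρ) ρ ν x,
    pd_comm (hζ ρ) σ μ x, pd_comm (hζ ρ) σ ν x, pd_comm (hζ ρ) σ ρ x,
    pd_comm (hζ σ) ν μ x, pd_comm (hζ σ) ρ μ x, pd_comm (hζ σ) ρ ν x,
    pd_comm (hζ σ) σ μ x, pd_comm (hζ σ) σ ν x, pd_comm (hζ σ) σ ρ x,
    pd_comm (hξ ρ) ν μ x, pd_comm (hξ ρ) ρ μ x, pd_comm (hξ ρ) ρ ν x,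
    pd_comm (hξ ρ) σ μ x, pd_comm (hξ ρ) σ ν x, pd_comm (hξ ρ) σ ρ x,
    pd_comm (hξ σ) ν μ x, pd_comm (hξ σ) ρ μ x, pd_comm (hξ σ) ρ ν x,
    pd_comm (hξ σ) σ μ x, pd_comm (hξ σ) σ ν x, pd_comm (hξ σ) σ ρ x]
  ring

/-! ### L2 -/

lemma pdB_swap {B : (Fin D → ℝ) → Fin D → Fin D → ℝ}
    (hBanti : ∀ x μ ν, B x μ ν = -B x ν μ) (a c b : Fin D) (x : Fin D → ℝ) :
    pd a (fun y => B y c b) x = -pd a (fun y => B y b c) x := by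
  have h : (fun y => B y c b) = fun y => -B y b c := funext fun y => hBanti y c b
  rw [h, pd_neg]

lemma pdpdB_swap {B : (Fin D → ℝ) → Fin D → Fin D → ℝ} (hBs : Smooth2T B)
    (hBanti : ∀ x μ ν, B x μ ν = -B x ν μ) (a b c d : Fin D) (x : Fin D → ℝ) :
    pd a (fun y => pd b (fun z => B z c d) y) x
      = -pd a (fun y => pd b (fun z => B z d c) y) x := by
  have h : (fun y => pd b (fun z => B z c d) y) = fun y => -pd b (fun z => B z d c) y :=
    funext fun y => pdB_swap hBanti b c d y
  rw [h, pd_neg]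

lemma pd_Htor {B : (Fin D → ℝ) → Fin D → Fin D → ℝ} (hBs : Smooth2T B)
    (a b c d : Fin D) (x : Fin D → ℝ) :
    pd a (fun y => Htor B b c d y) x
      = pd a (fun y => pd b (fun z => B z c d) y) x
        + pd a (fun y => pd c (fun z => B z d b) y) x
        + pd a (fun y => pd d (fun z => B z b c) y) x := by
  simp only [Htor]
  rw [pd_add (Sm.add ((hBs c d).pd b) ((hBs d b).pd c)) ((hBs b c).pd d),
    pd_add ((hBs c d).pd b) ((hBs d b).pd c)]

lemma pd_iHc {B : (Fin D → ℝ) → Fin D → Fin D → ℝ} {ξ : (Fin D → ℝ) → Fin D → ℝ}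
    (hBs : Smooth2T B) (hξ : SmoothVF ξ) (μ ν ρ : Fin D) (x : Fin D → ℝ) :
    pd ρ (fun y => iHc B ξ μ ν y) x
      = ∑ σ, (pd ρ (fun y => Htor B μ ν σ y) x * ξ x σ
          + Htor B μ ν σ x * pd ρ (fun y => ξ y σ) x) := by
  simp only [iHc]
  rw [pd_sum_mul (f := fun σ y => Htor B μ ν σ y) (g := fun σ y => ξ y σ)
    (fun σ => Sm_Htor hBs μ ν σ) (fun σ => hξ σ)]

lemma pd_wH {B : (Fin D → ℝ) → Fin D → Fin D → ℝ} {ζ ξ : (Fin D → ℝ) → Fin D → ℝ}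
    (hBs : Smooth2T B) (hζ : SmoothVF ζ) (hξ : SmoothVF ξ)
    (a e : Fin D) (x : Fin D → ℝ) :
    pd a (fun y => wH B ζ ξ y e) x
      = ∑ n, ∑ r, ((pd a (fun y => Htor B e n r y) x * ζ x n
            + Htor B e n r x * pd a (fun y => ζ y n) x) * ξ x r
          + Htor B e n r x * ζ x n * pd a (fun y => ξ y r) x) := by
  simp only [wH]
  rw [pd_sum (f := fun n y => ∑ r, Htor B e n r y * ζ y n * ξ y r) _
    (fun n _ => Sm.sum _ fun r _ =>
      Sm.mul (Sm.mul (Sm_Htor hBs e n r) (hζ n)) (hξ r))]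
  refine Finset.sum_congr rfl fun n _ => ?_
  rw [pd_sum_mul (f := fun r y => Htor B e n r y * ζ y n) (g := fun r y => ξ y r)
    (fun r => Sm.mul (Sm_Htor hBs e n r) (hζ n)) (fun r => hξ r)]
  refine Finset.sum_congr rfl fun r _ => ?_
  rw [pd_mul (Sm_Htor hBs e n r) (hζ n)]

lemma L2 {B : (Fin D → ℝ) → Fin D → Fin D → ℝ} {ζ ξ : (Fin D → ℝ) → Fin D → ℝ}
    (hBs : Smooth2T B) (hBanti : ∀ x μ ν, B x μ ν = -B x ν μ)
    (hζ : SmoothVF ζ) (hξ : SmoothVF ξ) (μ ν : Fin D) (x : Fin D → ℝ) :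
    iHc B (br ζ ξ) μ ν x - dF (wH B ζ ξ) μ ν x
      = lieT ζ (fun μ ν x => iHc B ξ μ ν x) μ ν x
        - lieT ξ (fun μ ν x => iHc B ζ μ ν x) μ ν x := by
  simp only [lieT]
  simp only [pd_iHc hBs hξ μ ν, pd_iHc hBs hζ μ ν]
  simp only [iHc, dF, br]
  rw [pd_wH hBs hζ hξ μ ν x, pd_wH hBs hζ hξ ν μ x]
  simp only [pd_Htor hBs]
  simp only [Htor]
  rw [← sub_eq_zero]
  simp only [Finset.mul_sum, Finset.sum_mul, mul_sub, mul_add, sub_mul, add_mul,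
    ← Finset.sum_sub_distrib, ← Finset.sum_add_distrib]
  refine sum_antisym fun ρ σ => ?_
  simp only [pdB_swap hBanti μ ν μ x,
    pdB_swap hBanti μ ρ μ x,
    pdB_swap hBanti μ σ μ x,
    pdB_swap hBanti μ ρ ν x,
    pdB_swap hBanti μ σ ν x,
    pdB_swap hBanti μ σ ρ x,
    pdB_swap hBanti ν ν μ x,
    pdB_swap hBanti ν ρ μ x,
    pdB_swap hBanti ν σ μ x,
    pdB_swap hBanti ν ρ ν x,
    pdB_swap hBanti ν σ ν x,
    pdB_swap hBanti ν σ ρ x,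
    pdB_swap hBanti ρ ν μ x,
    pdB_swap hBanti ρ ρ μ x,
    pdB_swap hBanti ρ σ μ x,
    pdB_swap hBanti ρ ρ ν x,
    pdB_swap hBanti ρ σ ν x,
    pdB_swap hBanti ρ σ ρ x,
    pdB_swap hBanti σ ν μ x,
    pdB_swap hBanti σ ρ μ x,
    pdB_swap hBanti σ σ μ x,
    pdB_swap hBanti σ ρ ν x,
    pdB_swap hBanti σ σ ν x,
    pdB_swap hBanti σ σ ρ x,
    pdpdB_swap hBs hBanti μ μ ν μ x,
    pdpdB_swap hBs hBanti μ μ ρ μ x,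
    pdpdB_swap hBs hBanti μ μ σ μ x,
    pdpdB_swap hBs hBanti μ μ ρ ν x,
    pdpdB_swap hBs hBanti μ μ σ ν x,
    pdpdB_swap hBs hBanti μ μ σ ρ x,
    pdpdB_swap hBs hBanti μ ν ν μ x,
    pdpdB_swap hBs hBanti μ ν ρ μ x,
    pdpdB_swap hBs hBanti μ ν σ μ x,
    pdpdB_swap hBs hBanti μ ν ρ ν x,
    pdpdB_swap hBs hBanti μ ν σ ν x,
    pdpdB_swap hBs hBanti μ ν σ ρ x,
    pdpdB_swap hBs hBanti μ ρ ν μ x,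
    pdpdB_swap hBs hBanti μ ρ ρ μ x,
    pdpdB_swap hBs hBanti μ ρ σ μ x,
    pdpdB_swap hBs hBanti μ ρ ρ ν x,
    pdpdB_swap hBs hBanti μ ρ σ ν x,
    pdpdB_swap hBs hBanti μ ρ σ ρ x,
    pdpdB_swap hBs hBanti μ σ ν μ x,
    pdpdB_swap hBs hBanti μ σ ρ μ x,
    pdpdB_swap hBs hBanti μ σ σ μ x,
    pdpdB_swap hBs hBanti μ σ ρ ν x,
    pdpdB_swap hBs hBanti μ σ σ ν x,
    pdpdB_swap hBs hBanti μ σ σ ρ x,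
    pdpdB_swap hBs hBanti ν μ ν μ x,
    pdpdB_swap hBs hBanti ν μ ρ μ x,
    pdpdB_swap hBs hBanti ν μ σ μ x,
    pdpdB_swap hBs hBanti ν μ ρ ν x,
    pdpdB_swap hBs hBanti ν μ σ ν x,
    pdpdB_swap hBs hBanti ν μ σ ρ x,
    pdpdB_swap hBs hBanti ν ν ν μ x,
    pdpdB_swap hBs hBanti ν ν ρ μ x,
    pdpdB_swap hBs hBanti ν ν σ μ x,
    pdpdB_swap hBs hBanti ν ν ρ ν x,
    pdpdB_swap hBs hBanti ν ν σ ν x,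
    pdpdB_swap hBs hBanti ν ν σ ρ x,
    pdpdB_swap hBs hBanti ν ρ ν μ x,
    pdpdB_swap hBs hBanti ν ρ ρ μ x,
    pdpdB_swap hBs hBanti ν ρ σ μ x,
    pdpdB_swap hBs hBanti ν ρ ρ ν x,
    pdpdB_swap hBs hBanti ν ρ σ ν x,
    pdpdB_swap hBs hBanti ν ρ σ ρ x,
    pdpdB_swap hBs hBanti ν σ ν μ x,
    pdpdB_swap hBs hBanti ν σ ρ μ x,
    pdpdB_swap hBs hBanti ν σ σ μ x,
    pdpdB_swap hBs hBanti ν σ ρ ν x,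
    pdpdB_swap hBs hBanti ν σ σ ν x,
    pdpdB_swap hBs hBanti ν σ σ ρ x,
    pdpdB_swap hBs hBanti ρ μ ν μ x,
    pdpdB_swap hBs hBanti ρ μ ρ μ x,
    pdpdB_swap hBs hBanti ρ μ σ μ x,
    pdpdB_swap hBs hBanti ρ μ ρ ν x,
    pdpdB_swap hBs hBanti ρ μ σ ν x,
    pdpdB_swap hBs hBanti ρ μ σ ρ x,
    pdpdB_swap hBs hBanti ρ ν ν μ x,
    pdpdB_swap hBs hBanti ρ ν ρ μ x,
    pdpdB_swap hBs hBanti ρ ν σ μ x,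
    pdpdB_swap hBs hBanti ρ ν ρ ν x,
    pdpdB_swap hBs hBanti ρ ν σ ν x,
    pdpdB_swap hBs hBanti ρ ν σ ρ x,
    pdpdB_swap hBs hBanti ρ ρ ν μ x,
    pdpdB_swap hBs hBanti ρ ρ ρ μ x,
    pdpdB_swap hBs hBanti ρ ρ σ μ x,
    pdpdB_swap hBs hBanti ρ ρ ρ ν x,
    pdpdB_swap hBs hBanti ρ ρ σ ν x,
    pdpdB_swap hBs hBanti ρ ρ σ ρ x,
    pdpdB_swap hBs hBanti ρ σ ν μ x,
    pdpdB_swap hBs hBanti ρ σ ρ μ x,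
    pdpdB_swap hBs hBanti ρ σ σ μ x,
    pdpdB_swap hBs hBanti ρ σ ρ ν x,
    pdpdB_swap hBs hBanti ρ σ σ ν x,
    pdpdB_swap hBs hBanti ρ σ σ ρ x,
    pdpdB_swap hBs hBanti σ μ ν μ x,
    pdpdB_swap hBs hBanti σ μ ρ μ x,
    pdpdB_swap hBs hBanti σ μ σ μ x,
    pdpdB_swap hBs hBanti σ μ ρ ν x,
    pdpdB_swap hBs hBanti σ μ σ ν x,
    pdpdB_swap hBs hBanti σ μ σ ρ x,
    pdpdB_swap hBs hBanti σ ν ν μ x,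
    pdpdB_swap hBs hBanti σ ν ρ μ x,
    pdpdB_swap hBs hBanti σ ν σ μ x,
    pdpdB_swap hBs hBanti σ ν ρ ν x,
    pdpdB_swap hBs hBanti σ ν σ ν x,
    pdpdB_swap hBs hBanti σ ν σ ρ x,
    pdpdB_swap hBs hBanti σ ρ ν μ x,
    pdpdB_swap hBs hBanti σ ρ ρ μ x,
    pdpdB_swap hBs hBanti σ ρ σ μ x,
    pdpdB_swap hBs hBanti σ ρ ρ ν x,
    pdpdB_swap hBs hBanti σ ρ σ ν x,
    pdpdB_swap hBs hBanti σ ρ σ ρ x,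
    pdpdB_swap hBs hBanti σ σ ν μ x,
    pdpdB_swap hBs hBanti σ σ ρ μ x,
    pdpdB_swap hBs hBanti σ σ σ μ x,
    pdpdB_swap hBs hBanti σ σ ρ ν x,
    pdpdB_swap hBs hBanti σ σ σ ν x,
    pdpdB_swap hBs hBanti σ σ σ ρ x,
    pd_comm (hBs μ μ) ν μ x,
    pd_comm (hBs μ ν) ν μ x,
    pd_comm (hBs μ ρ) ν μ x,
    pd_comm (hBs μ σ) ν μ x,
    pd_comm (hBs ν ν) ν μ x,
    pd_comm (hBs ν ρ) ν μ x,
    pd_comm (hBs ν σ) ν μ x,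
    pd_comm (hBs ρ ρ) ν μ x,
    pd_comm (hBs ρ σ) ν μ x,
    pd_comm (hBs σ σ) ν μ x,
    pd_comm (hBs μ μ) ρ μ x,
    pd_comm (hBs μ ν) ρ μ x,
    pd_comm (hBs μ ρ) ρ μ x,
    pd_comm (hBs μ σ) ρ μ x,
    pd_comm (hBs ν ν) ρ μ x,
    pd_comm (hBs ν ρ) ρ μ x,
    pd_comm (hBs ν σ) ρ μ x,
    pd_comm (hBs ρ ρ) ρ μ x,
    pd_comm (hBs ρ σ) ρ μ x,
    pd_comm (hBs σ σ) ρ μ x,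
    pd_comm (hBs μ μ) σ μ x,
    pd_comm (hBs μ ν) σ μ x,
    pd_comm (hBs μ ρ) σ μ x,
    pd_comm (hBs μ σ) σ μ x,
    pd_comm (hBs ν ν) σ μ x,
    pd_comm (hBs ν ρ) σ μ x,
    pd_comm (hBs ν σ) σ μ x,
    pd_comm (hBs ρ ρ) σ μ x,
    pd_comm (hBs ρ σ) σ μ x,
    pd_comm (hBs σ σ) σ μ x,
    pd_comm (hBs μ μ) ρ ν x,
    pd_comm (hBs μ ν) ρ ν x,
    pd_comm (hBs μ ρ) ρ ν x,
    pd_comm (hBs μ σ) ρ ν x,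
    pd_comm (hBs ν ν) ρ ν x,
    pd_comm (hBs ν ρ) ρ ν x,
    pd_comm (hBs ν σ) ρ ν x,
    pd_comm (hBs ρ ρ) ρ ν x,
    pd_comm (hBs ρ σ) ρ ν x,
    pd_comm (hBs σ σ) ρ ν x,
    pd_comm (hBs μ μ) σ ν x,
    pd_comm (hBs μ ν) σ ν x,
    pd_comm (hBs μ ρ) σ ν x,
    pd_comm (hBs μ σ) σ ν x,
    pd_comm (hBs ν ν) σ ν x,
    pd_comm (hBs ν ρ) σ ν x,
    pd_comm (hBs ν σ) σ ν x,
    pd_comm (hBs ρ ρ) σ ν x,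
    pd_comm (hBs ρ σ) σ ν x,
    pd_comm (hBs σ σ) σ ν x,
    pd_comm (hBs μ μ) σ ρ x,
    pd_comm (hBs μ ν) σ ρ x,
    pd_comm (hBs μ ρ) σ ρ x,
    pd_comm (hBs μ σ) σ ρ x,
    pd_comm (hBs ν ν) σ ρ x,
    pd_comm (hBs ν ρ) σ ρ x,
    pd_comm (hBs ν σ) σ ρ x,
    pd_comm (hBs ρ ρ) σ ρ x,
    pd_comm (hBs ρ σ) σ ρ x,
    pd_comm (hBs σ σ) σ ρ x]
  ring

/-! ### The Killing expression in Lie-derivative form -/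

lemma Htor_swap {B : (Fin D → ℝ) → Fin D → Fin D → ℝ}
    (hBanti : ∀ x μ ν, B x μ ν = -B x ν μ) (a b c : Fin D) (x : Fin D → ℝ) :
    Htor B a c b x = -Htor B a b c x := by
  simp only [Htor]
  rw [pdB_swap hBanti a c b x, pdB_swap hBanti c b a x, pdB_swap hBanti b a c x]
  ring

lemma Htor_cyc {B : (Fin D → ℝ) → Fin D → Fin D → ℝ} (a b c : Fin D) (x : Fin D → ℝ) :
    Htor B b c a x = Htor B a b c x := by
  simp only [Htor]; ring

lemma DmDp_eq {G B : (Fin D → ℝ) → Fin D → Fin D → ℝ} {V : (Fin D → ℝ) → Fin D → ℝ}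
    (hGsym : ∀ x μ ν, G x μ ν = G x ν μ) (hBanti : ∀ x μ ν, B x μ ν = -B x ν μ)
    (μ ν : Fin D) (x : Fin D → ℝ) :
    Dm G B V μ ν x + Dp G B V ν μ x = lieG G V μ ν x + iHc B V μ ν x := by
  have pdG_swap : ∀ a c b : Fin D, pd a (fun y => G y c b) x = pd a (fun y => G y b c) x :=
    fun a c b => by rw [show (fun y => G y c b) = fun y => G y b c from
      funext fun y => hGsym y c b]
  simp only [Dm, Dp, GamM, GamP, Gam, lieG, iHc]
  rw [← sub_eq_zero]
  simp only [Finset.mul_sum, Finset.sum_mul, mul_sub, mul_add, sub_mul, add_mul,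
    ← Finset.sum_sub_distrib, ← Finset.sum_add_distrib]
  refine Finset.sum_eq_zero fun ρ _ => ?_
  rw [Htor_swap hBanti μ ν ρ x, Htor_cyc μ ν ρ x]
  simp only [pdG_swap μ ρ ν, pdG_swap ν ρ ν, pdG_swap ρ ρ ν, pdG_swap μ ρ μ, pdG_swap ν ρ μ,
    pdG_swap ρ ρ μ, pdG_swap μ ν μ, pdG_swap ν ν μ, pdG_swap ρ ν μ,
    hGsym x ρ ν, hGsym x ρ μ, hGsym x ν μ]
  ring

lemma kil_zero {G B : (Fin D → ℝ) → Fin D → Fin D → ℝ} {ζ b : (Fin D → ℝ) → Fin D → ℝ}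
    (hGsym : ∀ x μ ν, G x μ ν = G x ν μ) (hBanti : ∀ x μ ν, B x μ ν = -B x ν μ)
    (hK : IsKillingPair G B ζ b) : ∀ μ ν x, Kil G B ζ b μ ν x = 0 := by
  intro μ ν x
  have h := hK μ ν x
  simp only [Kil, dF]
  rw [← DmDp_eq hGsym hBanti μ ν x]
  linarith

lemma lieT_zero {ζ : (Fin D → ℝ) → Fin D → ℝ} {T : Fin D → Fin D → (Fin D → ℝ) → ℝ}
    (hT : ∀ μ ν x, T μ ν x = 0) (μ ν : Fin D) (x : Fin D → ℝ) :
    lieT ζ T μ ν x = 0 := by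
  have h0 : ∀ ρ : Fin D, pd ρ (T μ ν) x = 0 := fun ρ => by
    rw [show T μ ν = fun _ => (0:ℝ) from funext fun y => hT μ ν y]
    exact pd_const 0 ρ x
  simp only [lieT, h0, hT, mul_zero, Finset.sum_const_zero, add_zero]

lemma lieT_kil {G B : (Fin D → ℝ) → Fin D → Fin D → ℝ} {ζ V w : (Fin D → ℝ) → Fin D → ℝ}
    (hGs : Smooth2T G) (hBs : Smooth2T B) (hV : SmoothVF V) (hw : SmoothVF w)
    (μ ν : Fin D) (x : Fin D → ℝ) :
    lieT ζ (fun μ ν x => Kil G B V w μ ν x) μ ν x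
      = lieT ζ (fun μ ν x => lieG G V μ ν x) μ ν x
        + lieT ζ (fun μ ν x => iHc B V μ ν x) μ ν x
        + lieT ζ (fun μ ν x => dF w μ ν x) μ ν x := by
  have hpd : ∀ ρ : Fin D, pd ρ (fun y => lieG G V μ ν y + iHc B V μ ν y + dF w μ ν y) x
      = pd ρ (fun y => lieG G V μ ν y) x + pd ρ (fun y => iHc B V μ ν y) x
        + pd ρ (fun y => dF w μ ν y) x := fun ρ => by
    rw [pd_add (Sm.add (Sm_lieG hGs hV μ ν) (Sm_iHc hBs hV μ ν)) (Sm_dF hw μ ν),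
        pd_add (Sm_lieG hGs hV μ ν) (Sm_iHc hBs hV μ ν)]
  simp only [lieT, Kil]
  simp only [hpd, mul_add]
  simp only [Finset.sum_add_distrib]
  ring

lemma master {G B : (Fin D → ℝ) → Fin D → Fin D → ℝ} {ζ b ξ c : (Fin D → ℝ) → Fin D → ℝ}
    (hGs : Smooth2T G) (hBs : Smooth2T B)
    (hBanti : ∀ x μ ν, B x μ ν = -B x ν μ)
    (hζ : SmoothVF ζ) (hb : SmoothVF b) (hξ : SmoothVF ξ) (hc : SmoothVF c)
    (μ ν : Fin D) (x : Fin D → ℝ) :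
    Kil G B (br ζ ξ) (fun y e => lv ζ c y e - lv ξ b y e - wH B ζ ξ y e) μ ν x
      = lieT ζ (fun μ ν x => Kil G B ξ c μ ν x) μ ν x
        - lieT ξ (fun μ ν x => Kil G B ζ b μ ν x) μ ν x := by
  have hdF : dF (fun y e => lv ζ c y e - lv ξ b y e - wH B ζ ξ y e) μ ν x
      = dF (lv ζ c) μ ν x - dF (lv ξ b) μ ν x - dF (wH B ζ ξ) μ ν x := by
    simp only [dF]
    rw [pd_sub (Sm.sub (Sm_lv hζ hc ν) (Sm_lv hξ hb ν)) (Sm_wH hBs hζ hξ ν),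
        pd_sub (Sm_lv hζ hc ν) (Sm_lv hξ hb ν),
        pd_sub (Sm.sub (Sm_lv hζ hc μ) (Sm_lv hξ hb μ)) (Sm_wH hBs hζ hξ μ),
        pd_sub (Sm_lv hζ hc μ) (Sm_lv hξ hb μ)]
    ring
  rw [lieT_kil hGs hBs hξ hc μ ν x, lieT_kil hGs hBs hζ hb μ ν x]
  simp only [Kil]
  rw [hdF, L1 hGs hζ hξ μ ν x, L3 hζ hc μ ν x, L3 hξ hb μ ν x]
  linear_combination L2 hBs hBanti hζ hξ μ ν x

/-- The Lie bracket of two Killing pairs is again a Killing pair, with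
`e_μ = (ℒ_ζ c)_μ − (ℒ_ξ b)_μ − H_{μνρ}ζ^νξ^ρ`. -/
theorem stmt7 {D : ℕ} (hD : 1 ≤ D)
    (G B : (Fin D → ℝ) → Fin D → Fin D → ℝ)
    (hGs : Smooth2T G) (hGsym : ∀ x μ ν, G x μ ν = G x ν μ)
    (hBs : Smooth2T B) (hBanti : ∀ x μ ν, B x μ ν = -B x ν μ)
    (ζ b ξ c : (Fin D → ℝ) → Fin D → ℝ)
    (hζ : SmoothVF ζ) (hb : SmoothVF b) (hξ : SmoothVF ξ) (hc : SmoothVF c)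
    (hζb : IsKillingPair G B ζ b) (hξc : IsKillingPair G B ξ c) :
    IsKillingPair G B
      (fun x μ => (∑ ν, ζ x ν * pd ν (fun y => ξ y μ) x)
        - ∑ ν, ξ x ν * pd ν (fun y => ζ y μ) x)
      (fun x μ =>
        ((∑ ρ, ζ x ρ * pd ρ (fun y => c y μ) x) + ∑ ρ, pd μ (fun y => ζ y ρ) x * c x ρ)
        - ((∑ ρ, ξ x ρ * pd ρ (fun y => b y μ) x) + ∑ ρ, pd μ (fun y => ξ y ρ) x * b x ρ)
        - ∑ ν, ∑ ρ, Htor B μ ν ρ x * ζ x ν * ξ x ρ) := by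
  have key : IsKillingPair G B (br ζ ξ)
      (fun y e => lv ζ c y e - lv ξ b y e - wH B ζ ξ y e) := by
    intro μ ν x
    have hz : Kil G B (br ζ ξ) (fun y e => lv ζ c y e - lv ξ b y e - wH B ζ ξ y e) μ ν x = 0 := by
      rw [master hGs hBs hBanti hζ hb hξ hc μ ν x,
        lieT_zero (kil_zero hGsym hBanti hξc) μ ν x,
        lieT_zero (kil_zero hGsym hBanti hζb) μ ν x]
      ring
    have h2 := DmDp_eq (B := B) (V := br ζ ξ) hGsym hBanti μ ν x
    simp only [Kil, dF] at hz
    linarith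
  exact key
end
end
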